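/- arXiv:1603.02731 — 2 statements merged into one kernel-verified Lean document; each statement's English description precedes it below -/
import Mathlib

section
/- Let Q be a commutative ring, f ∈ Q a nonzerodivisor, and R = Q/(f). Let C be a chain complex of R-modules with a lift (C̃, d̃) to finitely generated free Q-modules and Q-linear maps t̃_n : C̃_n → C̃_{n−2} satisfying d̃_{n−1}∘d̃_n = f·t̃_n. Define a sequence of free Q-modules D_n = C̃_{n−1} ⊕ C̃_{n−2} with maps d^D_n : D_n → D_{n−1} given by d^D_n(x,y) = (−d̃_{n−1}(x) − f·y, t̃_{n−1}(x) + d̃_{n−2}(y)). Then (D, d^D) is a chain complex over Q, i.e. d^D_{n−1}∘d^D_n = 0 for all n. (This complex is a lift to Q of the mapping cone of the Eisenbud operator t : C → Σ²C.) -/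
/-!
Statement 10 (Lemma 4.2, first part): for `R = Q/(f)` with `f` a nonzerodivisor, and a
complex `C` over `R` with lift `(C̃, d̃)` and maps `t̃` satisfying `d̃ ∘ d̃ = f • t̃`,
the sequence of free `Q`-modules `D_n = C̃_{n−1} ⊕ C̃_{n−2}` with maps
`d^D (x, y) = (−d̃ x − f • y, t̃ x + d̃ y)` is a chain complex over `Q`
(a lift of the mapping cone of the Eisenbud operator `t : C → Σ²C`).

Indexing: we write the lift as `dt n : C̃ (n+1) → C̃ n`, `tt n : C̃ (n+1+1) → C̃ n`, and
encode `D` by the family `n ↦ C̃ (n+1) × C̃ n` with differentials `coneDiff n`.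
-/

open TensorProduct

/-- The differential of the lifted mapping cone:
`(x, y) ↦ (−d̃ x − f • y, t̃ x + d̃ y)`. -/
def coneDiff (Q : Type) [CommRing Q] (f : Q)
    (Ct : ℤ → Type) [∀ n, AddCommGroup (Ct n)] [∀ n, Module Q (Ct n)]
    (dt : ∀ n : ℤ, Ct (n + 1) →ₗ[Q] Ct n)
    (tt : ∀ n : ℤ, Ct (n + 1 + 1) →ₗ[Q] Ct n) (n : ℤ) :
    (Ct (n + 1 + 1) × Ct (n + 1)) →ₗ[Q] (Ct (n + 1) × Ct n) :=
  LinearMap.prod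
    (-(dt (n + 1)).comp (LinearMap.fst Q (Ct (n + 1 + 1)) (Ct (n + 1))) -
      f • LinearMap.snd Q (Ct (n + 1 + 1)) (Ct (n + 1)))
    ((tt n).comp (LinearMap.fst Q (Ct (n + 1 + 1)) (Ct (n + 1))) +
      (dt n).comp (LinearMap.snd Q (Ct (n + 1 + 1)) (Ct (n + 1))))

/-- the lifted mapping cone is a complex: `d^D ∘ d^D = 0`. -/
theorem lifted_cone_is_complex
    (Q : Type) [CommRing Q] (f : Q) (hf : f ∈ nonZeroDivisors Q)
    (Ct : ℤ → Type) [∀ n, AddCommGroup (Ct n)] [∀ n, Module Q (Ct n)]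
    (hfree : ∀ n, Module.Free Q (Ct n)) (hfin : ∀ n, Module.Finite Q (Ct n))
    (dt : ∀ n : ℤ, Ct (n + 1) →ₗ[Q] Ct n)
    (tt : ∀ n : ℤ, Ct (n + 1 + 1) →ₗ[Q] Ct n)
    (hft : ∀ (n : ℤ) (x : Ct (n + 1 + 1)), dt n (dt (n + 1) x) = f • tt n x) :
    ∀ (n : ℤ) (z : Ct (n + 1 + 1 + 1) × Ct (n + 1 + 1)),
      coneDiff Q f Ct dt tt n (coneDiff Q f Ct dt tt (n + 1) z) = 0 := by
  intro n z
  obtain ⟨x, y⟩ := z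
  have hinj : Function.Injective (fun a : Ct n => f • a) := by
    have := hfree n
    intro a b hab
    let bs := Module.Free.chooseBasis Q (Ct n)
    apply bs.repr.injective
    ext i
    simp only at hab
    have : bs.repr (f • a) i = bs.repr (f • b) i := by rw [hab]
    simp only [map_smul, Finsupp.smul_apply, smul_eq_mul] at this
    exact (mul_cancel_left_mem_nonZeroDivisors hf).mp this
  have key : dt n (tt (n + 1) x) = tt n (dt (n + 1 + 1) x) := by
    apply hinj
    simp only [← map_smul, ← hft]
  simp only [coneDiff, LinearMap.prod_apply, LinearMap.sub_apply, LinearMap.add_apply,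
    LinearMap.neg_apply, LinearMap.comp_apply, LinearMap.fst_apply, LinearMap.snd_apply,
    LinearMap.smul_apply, Function.prod, map_neg, map_add, map_smul, map_sub, smul_add]
  rw [Prod.mk_eq_zero]
  constructor
  · rw [hft (n+1) x]; abel
  · rw [hft n y, key]; abel
end

section
/- Let Q be a commutative noetherian local ring with maximal ideal m, f ∈ m a nonzerodivisor, and R = Q/(f). Let C be an exact chain complex of R-modules with a lift (C̃, d̃) to finitely generated free Q-modules and Q-linear maps t̃_n : C̃_n → C̃_{n−2} satisfying d̃_{n−1}∘d̃_n = f·t̃_n. Let D be the Q-complex with D_n = C̃_{n−1} ⊕ C̃_{n−2} and differential d^D_n(x,y) = (−d̃_{n−1}(x) − f·y, t̃_{n−1}(x) + d̃_{n−2}(y)). Then D is exact: Ker d^D_n = Im d^D_{n+1} for all n. -/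
/-!
Statement 11 (Lemma 4.2, second part): for `Q` commutative noetherian local with maximal
ideal `m`, `f ∈ m` a nonzerodivisor, `R = Q/(f)`, and `C` an exact complex of
`R`-modules with lift `(C̃, d̃)` and maps `t̃` satisfying `d̃ ∘ d̃ = f • t̃`, the lifted
mapping cone `D` with `D_n = C̃_{n−1} ⊕ C̃_{n−2}` and differential
`d^D (x, y) = (−d̃ x − f • y, t̃ x + d̃ y)` is exact: `Ker d^D_n = Im d^D_{n+1}`.

The complex `C` is encoded as the base change of the lift: modules `R ⊗[Q] C̃ n`,
differentials `(d̃ n) ⊗ R`; its exactness is the stated hypothesis.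
-/

open TensorProduct

section Aux
variable {Q : Type} [CommRing Q] (f : Q) {M : Type} [AddCommGroup M] [Module Q M]

lemma aux_tmul_surj (z : (Q ⧸ Ideal.span {f}) ⊗[Q] M) : ∃ m : M, (1 : Q ⧸ Ideal.span {f}) ⊗ₜ[Q] m = z := by
  set e := quotTensorEquivQuotSMul M (Ideal.span {f})
  obtain ⟨m, hm⟩ := Submodule.mkQ_surjective _ (e z)
  refine ⟨m, e.injective ?_⟩
  have : (1 : Q ⧸ Ideal.span {f}) = Ideal.Quotient.mk _ (1 : Q) := rfl
  rw [this, quotTensorEquivQuotSMul_mk_tmul, one_smul]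
  exact hm.trans rfl |>.trans (by simp [e])

lemma aux_tmul_eq_zero_iff (x : M) :
    (1 : Q ⧸ Ideal.span {f}) ⊗ₜ[Q] x = 0 ↔ ∃ w : M, x = f • w := by
  set e := quotTensorEquivQuotSMul M (Ideal.span {f})
  have h1 : (1 : Q ⧸ Ideal.span {f}) = Ideal.Quotient.mk _ (1 : Q) := rfl
  constructor
  · intro h
    have : Submodule.Quotient.mk x ∈ (⊥ : Submodule Q (M ⧸ (Ideal.span {f} • ⊤ : Submodule Q M))) := by
      have := congrArg e h
      rw [h1, quotTensorEquivQuotSMul_mk_tmul, one_smul, map_zero] at this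
      simpa using this
    have hx : x ∈ (Ideal.span {f} • ⊤ : Submodule Q M) := by
      simpa [Submodule.Quotient.mk_eq_zero] using this
    -- span{f} • ⊤ ≤ range (f • id)
    have hle : (Ideal.span {f} • ⊤ : Submodule Q M) ≤
        LinearMap.range (f • (LinearMap.id : M →ₗ[Q] M)) := by
      refine Submodule.smul_le.mpr ?_
      intro r hr m _
      obtain ⟨c, rfl⟩ := Ideal.mem_span_singleton'.mp hr
      exact ⟨c • m, by simp [mul_smul, smul_comm f c]⟩
    obtain ⟨w, hw⟩ := hle hx
    exact ⟨w, by simpa using hw.symm⟩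
  · rintro ⟨w, rfl⟩
    rw [show ((1 : Q ⧸ Ideal.span {f}) ⊗ₜ[Q] (f • w)) = (f • (1 : Q ⧸ Ideal.span {f})) ⊗ₜ[Q] w from (smul_tmul f _ w).symm]
    have : f • (1 : Q ⧸ Ideal.span {f}) = 0 := by
      have : f • (1 : Q ⧸ Ideal.span {f}) = Ideal.Quotient.mk _ f := by
        rw [h1]
        show Ideal.Quotient.mk _ (f * 1) = _
        rw [mul_one]
      rw [this]
      simpa [Ideal.Quotient.eq_zero_iff_mem] using Ideal.mem_span_singleton_self f
    rw [this, zero_tmul]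

lemma aux_smul_cancel [Module.Free Q M] (hf : f ∈ nonZeroDivisors Q)
    {x y : M} (h : f • x = f • y) : x = y := by
  let b := Module.Free.chooseBasis Q M
  apply b.repr.injective
  ext i
  have := congrArg (fun z => b.repr z i) h
  simp only [map_smul, Finsupp.smul_apply, smul_eq_mul] at this
  exact (mul_cancel_left_mem_nonZeroDivisors hf).mp this

end Aux

/-- if the reduced complex `C` is exact, then the lifted mapping cone
is an exact complex over `Q`. -/
theorem lifted_cone_is_exact
    (Q : Type) [CommRing Q] [IsNoetherianRing Q] [IsLocalRing Q]
    (f : Q) (hfm : f ∈ IsLocalRing.maximalIdeal Q) (hf : f ∈ nonZeroDivisors Q)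
    (Ct : ℤ → Type) [∀ n, AddCommGroup (Ct n)] [∀ n, Module Q (Ct n)]
    (hfree : ∀ n, Module.Free Q (Ct n)) (hfin : ∀ n, Module.Finite Q (Ct n))
    (dt : ∀ n : ℤ, Ct (n + 1) →ₗ[Q] Ct n)
    (tt : ∀ n : ℤ, Ct (n + 1 + 1) →ₗ[Q] Ct n)
    (hft : ∀ (n : ℤ) (x : Ct (n + 1 + 1)), dt n (dt (n + 1) x) = f • tt n x)
    -- the reduced complex `C` over `R = Q/(f)` is exact
    (hex : ∀ n : ℤ,
      LinearMap.ker ((dt n).baseChange (Q ⧸ Ideal.span {f})) =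
        LinearMap.range ((dt (n + 1)).baseChange (Q ⧸ Ideal.span {f}))) :
    ∀ n : ℤ,
      LinearMap.ker (coneDiff Q f Ct dt tt n) =
        LinearMap.range (coneDiff Q f Ct dt tt (n + 1)) := by
  haveI := hfree
  have hcomm : ∀ (n : ℤ) (u : Ct (n + 1 + 1 + 1)),
      dt n (tt (n + 1) u) = tt n (dt (n + 1 + 1) u) := by
    intro n u
    refine aux_smul_cancel f hf ?_
    rw [← hft n, ← map_smul, ← hft (n + 1)]
  intro n
  apply le_antisymm
  · -- ker ≤ range
    rintro ⟨x, y⟩ hxy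
    rw [LinearMap.mem_ker] at hxy
    simp only [coneDiff, LinearMap.prod_apply, Function.prod, LinearMap.sub_apply,
      LinearMap.neg_apply, LinearMap.coe_comp, Function.comp_apply,
      LinearMap.fst_apply, LinearMap.snd_apply, LinearMap.smul_apply,
      LinearMap.add_apply, Prod.mk_eq_zero] at hxy
    obtain ⟨h1, h2⟩ := hxy
    -- h1 : -(dt (n+1) x) - f • y = 0
    have h1' : -(dt (n + 1) x) = f • y := eq_of_sub_eq_zero h1
    have hdx : dt (n + 1) x = f • (-y) := by
      rw [smul_neg]
      exact neg_eq_iff_eq_neg.mp h1'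
    have hker : (1 : Q ⧸ Ideal.span {f}) ⊗ₜ[Q] x ∈
        LinearMap.ker ((dt (n + 1)).baseChange (Q ⧸ Ideal.span {f})) := by
      rw [LinearMap.mem_ker, LinearMap.baseChange_tmul, hdx]
      exact (aux_tmul_eq_zero_iff f _).mpr ⟨-y, rfl⟩
    rw [hex (n + 1)] at hker
    obtain ⟨ξ, hξ⟩ := hker
    obtain ⟨u', rfl⟩ := aux_tmul_surj f ξ
    rw [LinearMap.baseChange_tmul] at hξ
    have hz : (1 : Q ⧸ Ideal.span {f}) ⊗ₜ[Q] (x - dt (n + 1 + 1) u') = 0 := by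
      rw [TensorProduct.tmul_sub, hξ, sub_self]
    obtain ⟨w, hw⟩ := (aux_tmul_eq_zero_iff f _).mp hz
    have hx : x = dt (n + 1 + 1) u' + f • w := sub_eq_iff_eq_add'.mp hw
    refine ⟨(-u', -w), ?_⟩
    simp only [coneDiff, LinearMap.prod_apply, Function.prod, LinearMap.sub_apply,
      LinearMap.neg_apply, LinearMap.coe_comp, Function.comp_apply,
      LinearMap.fst_apply, LinearMap.snd_apply, LinearMap.smul_apply,
      LinearMap.add_apply, Prod.mk.injEq]
    refine ⟨?_, ?_⟩
    · rw [map_neg, neg_neg, smul_neg, sub_neg_eq_add]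
      exact hx.symm
    · refine aux_smul_cancel f hf ?_
      have hax : dt (n + 1) x = f • tt (n + 1) u' + f • dt (n + 1) w := by
        rw [hx, map_add, map_smul, hft (n + 1) u']
      rw [show f • y = -(dt (n + 1) x) from h1'.symm, hax, map_neg, map_neg]
      module
  · -- range ≤ ker
    rintro z ⟨⟨u, v⟩, rfl⟩
    rw [LinearMap.mem_ker]
    simp only [coneDiff, LinearMap.prod_apply, Function.prod, LinearMap.sub_apply,
      LinearMap.neg_apply, LinearMap.coe_comp, Function.comp_apply,
      LinearMap.fst_apply, LinearMap.snd_apply, LinearMap.smul_apply,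
      LinearMap.add_apply, Prod.mk_eq_zero]
    refine ⟨?_, ?_⟩
    · rw [map_sub, map_neg, map_smul, hft (n + 1) u]
      module
    · rw [map_sub, map_neg, map_smul, map_add, hcomm n u, hft n v]
      module
end
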